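/- Let G be a connected finite undirected multigraph with s, t ∈ V(G), s ≠ t, let λ = λ_G(s,t), and let C_0, …, C_p and V_0, …, V_{p+1} be the canonical sequence of minimum (s,t)-cuts and the blocks of G. Then each block V_i induces a subgraph G[V_i] with at most λ connected components; for 1 ≤ i ≤ p, each connected component of G[V_i] is incident with some number c ≥ 1 of edges of C_{i−1} and with exactly c edges of C_i; moreover V_0 and V_{p+1} are connected, V_0 is incident with all λ edges of C_0, and V_{p+1} is incident with all λ edges of C_p. -/

import Mathlib

/-!
A finite undirected multigraph (parallel edges allowed, no loops) is modelled by a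
vertex type `V`, an edge type `E` (both finite) and an endpoint map `ends : E → Sym2 V`
such that no edge is a loop (`¬ (ends e).IsDiag`).
-/

namespace FlowAug

variable {V E : Type}

/-- Two vertices are adjacent in `G - X` if some edge outside `X` joins them. -/
def Adj (ends : E → Sym2 V) (X : Set E) (u v : V) : Prop :=
  ∃ e, e ∉ X ∧ ends e = s(u, v)

/-- Reachability in `G - X`. -/
def Reach (ends : E → Sym2 V) (X : Set E) : V → V → Prop :=
  Relation.ReflTransGen (Adj ends X)

/-- `R_S(X)` : the set of vertices reachable from the vertex set `S` in `G - X`. -/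
def RS (ends : E → Sym2 V) (X : Set E) (S : Set V) : Set V :=
  {v | ∃ u ∈ S, Reach ends X u v}

/-- `δ(S)` : the set of edges with exactly one endpoint in `S`. -/
def edgeBoundary (ends : E → Sym2 V) (S : Set V) : Set E :=
  {e | ∃ u v, ends e = s(u, v) ∧ u ∈ S ∧ v ∉ S}

/-- `X` is an `(S,T)`-cut. -/
def IsCut (ends : E → Sym2 V) (X : Set E) (S T : Set V) : Prop :=
  RS ends X S ∩ RS ends X T = ∅

/-- `X` is a minimal `(S,T)`-cut: no proper subset of `X` is an `(S,T)`-cut. -/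
def IsMinimalCut (ends : E → Sym2 V) (X : Set E) (S T : Set V) : Prop :=
  IsCut ends X S T ∧ ∀ Y : Set E, Y ⊂ X → ¬ IsCut ends Y S T

/-- `X` is an `(S,T)`-cut of minimum cardinality. -/
def IsMinimumCut (ends : E → Sym2 V) (X : Set E) (S T : Set V) : Prop :=
  IsCut ends X S T ∧ ∀ Y : Set E, IsCut ends Y S T → X.ncard ≤ Y.ncard

/-- `X` is an `(S,T)`-cut that is closest to `S`: every `(S,T)`-cut `X' ≠ X` with
`R_S(X') ⊆ R_S(X)` satisfies `|X'| > |X|`. -/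
def IsClosestCut (ends : E → Sym2 V) (X : Set E) (S T : Set V) : Prop :=
  IsCut ends X S T ∧
    ∀ X' : Set E, IsCut ends X' S T → X' ≠ X →
      RS ends X' S ⊆ RS ends X S → X.ncard < X'.ncard

/-- `λ_G(s,t)` : the minimum cardinality of an `(s,t)`-cut (equivalently, by Menger's
theorem, the maximum number of pairwise edge-disjoint `(s,t)`-paths). -/
noncomputable def lamCut (ends : E → Sym2 V) (s t : V) : ℕ :=
  sInf {n | ∃ X : Set E, IsCut ends X {s} {t} ∧ X.ncard = n}

/-- `Z_{s,t}` : the edges of `Z` with one endpoint in `R_s(Z)` and one in `R_t(Z)`. -/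
def Zst (ends : E → Sym2 V) (s t : V) (Z : Set E) : Set E :=
  {e | e ∈ Z ∧ ∃ u v, ends e = s(u, v) ∧ u ∈ RS ends Z {s} ∧ v ∈ RS ends Z {t}}

/-- `Z` is a special `(s,t)`-cut: `Z` is an `(s,t)`-cut and `Z_{s,t}` is an `(s,t)`-cut. -/
def IsSpecial (ends : E → Sym2 V) (s t : V) (Z : Set E) : Prop :=
  IsCut ends Z {s} {t} ∧ IsCut ends (Zst ends s t Z) {s} {t}

/-- `Z` is eligible for `(s,t)`: special, and every edge of `Z` has its endpoints in
different connected components of `G - Z`. -/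
def IsEligible (ends : E → Sym2 V) (s t : V) (Z : Set E) : Prop :=
  IsSpecial ends s t Z ∧ ∀ e ∈ Z, ∀ u v : V, ends e = s(u, v) → ¬ Reach ends Z u v

/-- `Z` is a star `(s,t)`-cut: an `(s,t)`-cut each of whose edges has exactly one
endpoint in `R_s(Z)`. -/
def IsStarCut (ends : E → Sym2 V) (s t : V) (Z : Set E) : Prop :=
  IsCut ends Z {s} {t} ∧
    ∀ e ∈ Z, ∃ u v : V, ends e = s(u, v) ∧ u ∈ RS ends Z {s} ∧ v ∉ RS ends Z {s}

/-- A path from `s` to `t` in the multigraph described by `ends`, given by its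
sequence of vertices and traversed edges. -/
structure MGPath (V E : Type) (ends : E → Sym2 V) (s t : V) where
  n : ℕ
  vert : Fin (n + 1) → V
  edge : Fin n → E
  vert_zero : vert 0 = s
  vert_last : vert (Fin.last n) = t
  ends_eq : ∀ i : Fin n, ends (edge i) = s(vert i.castSucc, vert i.succ)

/-- A family of paths is (pairwise) edge-disjoint: no edge is used twice, neither on
a single path nor on two different paths. -/
def EdgeDisjoint {ends : E → Sym2 V} {s t : V} {k : ℕ}
    (P : Fin k → MGPath V E ends s t) : Prop :=
  Function.Injective fun p : (Σ i : Fin k, Fin (P i).n) => (P p.1).edge p.2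

/-- `P` is a witnessing `(s,t)`-flow for `Z`: a family of `λ_G(s,t)` pairwise
edge-disjoint `(s,t)`-paths such that every edge of `Z_{s,t}` occurs on a path of `P`
and every path of `P` contains exactly one edge of `Z`. -/
def IsWitnessingFlow (ends : E → Sym2 V) (s t : V) (Z : Set E) {k : ℕ}
    (P : Fin k → MGPath V E ends s t) : Prop :=
  k = lamCut ends s t ∧ EdgeDisjoint P ∧
    (∀ e ∈ Zst ends s t Z, ∃ (i : Fin k) (j : Fin (P i).n), (P i).edge j = e) ∧
    ∀ i : Fin k, ∃! j : Fin (P i).n, (P i).edge j ∈ Z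

/-- The vertices occurring on the paths of a family `P`. -/
def pathVerts {ends : E → Sym2 V} {s t : V} {k : ℕ}
    (P : Fin k → MGPath V E ends s t) : Set V :=
  {v | ∃ (i : Fin k) (m : Fin ((P i).n + 1)), (P i).vert m = v}

/-- The edges occurring on the paths of a family `P`. -/
def pathEdges {ends : E → Sym2 V} {s t : V} {k : ℕ}
    (P : Fin k → MGPath V E ends s t) : Set E :=
  {e | ∃ (i : Fin k) (j : Fin (P i).n), (P i).edge j = e}

/-- The arcs obtained by orienting every edge of every path of `P` in the forward
direction (from `s` towards `t`). -/
def DirAdjOnFlow {ends : E → Sym2 V} {s t : V} {k : ℕ}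
    (P : Fin k → MGPath V E ends s t) (u v : V) : Prop :=
  ∃ (i : Fin k) (l : Fin (P i).n), (P i).vert l.castSucc = u ∧ (P i).vert l.succ = v

/-- `N[S]` : the closed neighborhood of `S`. -/
def closedNbhd (ends : E → Sym2 V) (S : Set V) : Set V :=
  S ∪ {v | ∃ u ∈ S, ∃ e : E, ends e = s(u, v)}

/-- `X` is the minimum `(s,t)`-cut closest to `s` among all minimum `(s,t)`-cuts
satisfying the property `P`. -/
def IsClosestMinCutAmong (ends : E → Sym2 V) (s t : V) (P : Set E → Prop)
    (X : Set E) : Prop :=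
  IsMinimumCut ends X {s} {t} ∧ P X ∧
    ∀ Y : Set E, IsMinimumCut ends Y {s} {t} → P Y → Y ≠ X →
      RS ends Y {s} ⊆ RS ends X {s} → X.ncard < Y.ncard

/-- `C 0, …, C p` is the canonical sequence of non-crossing minimum `(s,t)`-cuts:
`C 0` is the unique minimum `(s,t)`-cut closest to `s`; `C i` is the unique minimum
`(s,t)`-cut closest to `s` among all minimum `(s,t)`-cuts `X` with
`N[R_s(C (i-1))] ⊆ R_s(X)`; and `p` is the largest index for which such a cut exists. -/
def CanonSeq (ends : E → Sym2 V) (s t : V) (p : ℕ) (C : ℕ → Set E) : Prop :=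
  IsClosestMinCutAmong ends s t (fun _ => True) (C 0) ∧
    (∀ i : ℕ, 0 < i → i ≤ p →
      IsClosestMinCutAmong ends s t
        (fun X => closedNbhd ends (RS ends (C (i - 1)) {s}) ⊆ RS ends X {s}) (C i)) ∧
    ¬ ∃ X : Set E, IsMinimumCut ends X {s} {t} ∧
        closedNbhd ends (RS ends (C p) {s}) ⊆ RS ends X {s}

/-- The blocks `V_0, …, V_{p+1}` associated with the canonical sequence of cuts. -/
def blockOf (ends : E → Sym2 V) (s : V) (p : ℕ) (C : ℕ → Set E) (i : ℕ) : Set V :=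
  if i = 0 then RS ends (C 0) {s}
  else if i ≤ p then RS ends (C i) {s} \ RS ends (C (i - 1)) {s}
  else Set.univ \ RS ends (C p) {s}

/-- Adjacency inside the induced subgraph `G[B]`. -/
def AdjIn (ends : E → Sym2 V) (B : Set V) (u v : V) : Prop :=
  u ∈ B ∧ v ∈ B ∧ ∃ e : E, ends e = s(u, v)

/-- Reachability inside the induced subgraph `G[B]`. -/
def ReachIn (ends : E → Sym2 V) (B : Set V) : V → V → Prop :=
  Relation.ReflTransGen (AdjIn ends B)

/-- The induced subgraph `G[B]` is connected. -/
def ConnIn (ends : E → Sym2 V) (B : Set V) : Prop :=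
  ∀ u ∈ B, ∀ v ∈ B, ReachIn ends B u v

/-- The connected component of `u` in the induced subgraph `G[B]`. -/
def compIn (ends : E → Sym2 V) (B : Set V) (u : V) : Set V :=
  {v | v ∈ B ∧ ReachIn ends B u v}

/-- The set of connected components of the induced subgraph `G[B]`. -/
def componentsIn (ends : E → Sym2 V) (B : Set V) : Set (Set V) :=
  {K | ∃ u ∈ B, K = compIn ends B u}

/-- The union of the blocks `V_a, …, V_b`. -/
def unionBlocks (ends : E → Sym2 V) (s : V) (p : ℕ) (C : ℕ → Set E)
    (a b : ℕ) : Set V :=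
  ⋃ j ∈ Set.Icc a b, blockOf ends s p C j

/-- `st` encodes the decomposition of the blocks `V_0, …, V_{p+1}` into bundles
`W_0, …, W_{q+1}`: bundle `W_i` consists of the blocks `V_{st i}, …, V_{st (i+1) - 1}`.
`W_0 = V_0`, and each further bundle is greedily either a single connected block, or a
maximal union of contiguous blocks inducing a disconnected subgraph. -/
def IsBundleSeq (ends : E → Sym2 V) (s : V) (p : ℕ) (C : ℕ → Set E)
    (q : ℕ) (st : ℕ → ℕ) : Prop :=
  st 0 = 0 ∧ st 1 = 1 ∧ st (q + 2) = p + 2 ∧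
    (∀ i j : ℕ, i < j → j ≤ q + 2 → st i < st j) ∧
    ∀ i : ℕ, 1 ≤ i → i ≤ q + 1 →
      (st (i + 1) = st i + 1 ∧ ConnIn ends (blockOf ends s p C (st i))) ∨
      (¬ ConnIn ends (blockOf ends s p C (st i)) ∧
        ¬ ConnIn ends (unionBlocks ends s p C (st i) (st (i + 1) - 1)) ∧
        ∀ j : ℕ, st (i + 1) - 1 < j → j ≤ p + 1 →
          ConnIn ends (unionBlocks ends s p C (st i) j))

/-- The bundle `W_i`. -/
def bundleOf (ends : E → Sym2 V) (s : V) (p : ℕ) (C : ℕ → Set E) (st : ℕ → ℕ)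
    (i : ℕ) : Set V :=
  unionBlocks ends s p C (st i) (st (i + 1) - 1)

/-- `C'_i` : the cut (among `C_0, …, C_p`) separating bundle `W_i` from `W_{i+1}`. -/
def interCut (C : ℕ → Set E) (st : ℕ → ℕ) (i : ℕ) : Set E :=
  C (st (i + 1) - 1)

/-- A bundle `W` is unaffected by `Z` if `N[W]` is contained in a single connected
component of `G - Z`. -/
def Unaffected (ends : E → Sym2 V) (Z : Set E) (W : Set V) : Prop :=
  ∀ u ∈ closedNbhd ends W, ∀ v ∈ closedNbhd ends W, Reach ends Z u v

/-- The stretch `W_{a,b} = W_a ∪ ⋯ ∪ W_b` of bundles. -/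
def stretchSet (ends : E → Sym2 V) (s : V) (p : ℕ) (C : ℕ → Set E) (st : ℕ → ℕ)
    (a b : ℕ) : Set V :=
  ⋃ i ∈ Set.Icc a b, bundleOf ends s p C st i

/-- The left interface of a stretch starting at bundle `W_a`. -/
def leftInterface (ends : E → Sym2 V) (s : V) (p : ℕ) (C : ℕ → Set E) (st : ℕ → ℕ)
    (a : ℕ) : Set V :=
  if a = 0 then {s}
  else {v | v ∈ bundleOf ends s p C st a ∧ ∃ e ∈ interCut C st (a - 1), v ∈ ends e}

/-- The right interface of a stretch ending at bundle `W_b`. -/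
def rightInterface (ends : E → Sym2 V) (s t : V) (p : ℕ) (C : ℕ → Set E)
    (st : ℕ → ℕ) (q b : ℕ) : Set V :=
  if b = q + 1 then {t}
  else {v | v ∈ bundleOf ends s p C st b ∧ ∃ e ∈ interCut C st b, v ∈ ends e}

/-- `W_{a,b}` is a maximal stretch of bundles all affected by `Z`. -/
def MaxAffStretch (ends : E → Sym2 V) (s : V) (p : ℕ) (C : ℕ → Set E)
    (st : ℕ → ℕ) (q : ℕ) (Z : Set E) (a b : ℕ) : Prop :=
  a ≤ b ∧ b ≤ q + 1 ∧
    (∀ i : ℕ, a ≤ i → i ≤ b → ¬ Unaffected ends Z (bundleOf ends s p C st i)) ∧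
    (a = 0 ∨ Unaffected ends Z (bundleOf ends s p C st (a - 1))) ∧
    (b = q + 1 ∨ Unaffected ends Z (bundleOf ends s p C st (b + 1)))

/-- `W_{a,b}` is a maximal stretch of bundles affected by `Z` containing both a vertex
reachable from `s` and a vertex reachable from `t` in `G - Z`. -/
def StronglyAffStretch (ends : E → Sym2 V) (s t : V) (p : ℕ) (C : ℕ → Set E)
    (st : ℕ → ℕ) (q : ℕ) (Z : Set E) (a b : ℕ) : Prop :=
  MaxAffStretch ends s p C st q Z a b ∧
    (stretchSet ends s p C st a b ∩ RS ends Z {s}).Nonempty ∧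
    (stretchSet ends s p C st a b ∩ RS ends Z {t}).Nonempty

/-- Adjacency inside the induced subgraph `G[B]` avoiding the edge set `X`. -/
def AdjInX (ends : E → Sym2 V) (B : Set V) (X : Set E) (u v : V) : Prop :=
  u ∈ B ∧ v ∈ B ∧ ∃ e, e ∉ X ∧ ends e = s(u, v)

/-- Reachability inside `G[B] - X`. -/
def ReachInX (ends : E → Sym2 V) (B : Set V) (X : Set E) : V → V → Prop :=
  Relation.ReflTransGen (AdjInX ends B X)

/-- `X` is a star `(a,b)`-cut of the induced subgraph `H = G[B]`: in `H - X` no path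
connects `a` and `b`, and every edge of `X` has exactly one endpoint reachable from
`a` in `H - X`. -/
def IsStarCutIn (ends : E → Sym2 V) (B : Set V) (a b : V) (X : Set E) : Prop :=
  ¬ ReachInX ends B X a b ∧
    ∀ e ∈ X, ∃ u v : V, ends e = s(u, v) ∧
      ReachInX ends B X a u ∧ ¬ ReachInX ends B X a v

end FlowAug

namespace FlowAug

section Basic
variable {V E : Type}

lemma sym2_repr (z : Sym2 V) : ∃ u v, z = s(u, v) :=
  Sym2.ind (fun u v => ⟨u, v, rfl⟩) z

lemma adj_symm {ends : E → Sym2 V} {X : Set E} {u v : V}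
    (h : Adj ends X u v) : Adj ends X v u := by
  obtain ⟨e, he, hev⟩ := h
  exact ⟨e, he, by rw [hev, Sym2.eq_swap]⟩

lemma reach_symm {ends : E → Sym2 V} {X : Set E} {u v : V}
    (h : Reach ends X u v) : Reach ends X v u :=
  (@Relation.ReflTransGen.symmetric _ _ ⟨fun _ _ h => adj_symm h⟩).symm _ _ h

lemma mem_RS_iff {ends : E → Sym2 V} {X : Set E} {s v : V} :
    v ∈ RS ends X {s} ↔ Reach ends X s v := by
  simp [RS]

lemma not_both {ends : E → Sym2 V} {X : Set E} {s t : V}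
    (hX : IsCut ends X {s} {t}) {w : V}
    (h1 : Reach ends X s w) (h2 : Reach ends X t w) : False :=
  Set.eq_empty_iff_forall_notMem.mp hX w ⟨mem_RS_iff.mpr h1, mem_RS_iff.mpr h2⟩

lemma edge_mem_of_cross {ends : E → Sym2 V} {X : Set E} {s u v : V} {e : E}
    (hu : Reach ends X s u) (hv : ¬ Reach ends X s v)
    (he : ends e = s(u, v)) : e ∈ X := by
  by_contra h
  exact hv (hu.tail ⟨e, h, he⟩)

lemma reach_del {ends : E → Sym2 V} {X : Set E} {e : E} {u v a b : V}
    (huv : ends e = s(u, v)) (h : Reach ends (X \ {e}) a b) :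
    Reach ends X a b ∨ (Reach ends X a u ∧ Reach ends X v b) ∨
      (Reach ends X a v ∧ Reach ends X u b) := by
  induction h with
  | refl => exact Or.inl .refl
  | @tail c b _ hcb ih =>
    obtain ⟨f, hf, hfe⟩ := hcb
    by_cases hfX : f ∈ X
    · have hfee : f = e := by
        by_contra hne
        exact hf ⟨hfX, hne⟩
      subst hfee
      rw [huv] at hfe
      rcases Sym2.eq_iff.mp hfe with ⟨hu1, hv1⟩ | ⟨hu1, hv1⟩
      · subst hu1; subst hv1
        rcases ih with h1 | ⟨h1, h2⟩ | ⟨h1, h2⟩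
        · exact Or.inr (Or.inl ⟨h1, .refl⟩)
        · exact Or.inr (Or.inl ⟨h1, .refl⟩)
        · exact Or.inl h1
      · subst hu1; subst hv1
        rcases ih with h1 | ⟨h1, h2⟩ | ⟨h1, h2⟩
        · exact Or.inr (Or.inr ⟨h1, .refl⟩)
        · exact Or.inl h1
        · exact Or.inr (Or.inr ⟨h1, .refl⟩)
    · have hadj : Adj ends X c b := ⟨f, hfX, hfe⟩
      rcases ih with h1 | ⟨h1, h2⟩ | ⟨h1, h2⟩
      · exact Or.inl (h1.tail hadj)
      · exact Or.inr (Or.inl ⟨h1, h2.tail hadj⟩)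
      · exact Or.inr (Or.inr ⟨h1, h2.tail hadj⟩)

lemma minCut_edge {ends : E → Sym2 V} {s t : V} {X : Set E} [Fintype E]
    (hX : IsMinimumCut ends X {s} {t}) {e : E} (he : e ∈ X) :
    ∃ u v, ends e = s(u, v) ∧ Reach ends X s u ∧ Reach ends X t v := by
  have hYlt : (X \ {e}).ncard < X.ncard :=
    Set.ncard_diff_singleton_lt_of_mem he X.toFinite
  have hYnc : ¬ IsCut ends (X \ {e}) {s} {t} := by
    intro hc
    exact absurd (hX.2 _ hc) (by omega)
  rw [IsCut, Set.eq_empty_iff_forall_notMem] at hYnc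
  push_neg at hYnc
  obtain ⟨w, hw1, hw2⟩ := hYnc
  have hst' : Reach ends (X \ {e}) s t :=
    (mem_RS_iff.mp hw1).trans (reach_symm (mem_RS_iff.mp hw2))
  obtain ⟨u, v, huv⟩ := sym2_repr (ends e)
  rcases reach_del huv hst' with h1 | ⟨h1, h2⟩ | ⟨h1, h2⟩
  · exact absurd (not_both hX.1 h1 .refl) not_false
  · exact ⟨u, v, huv, h1, reach_symm h2⟩
  · exact ⟨v, u, by rw [huv, Sym2.eq_swap], h1, reach_symm h2⟩

lemma minCut_cover {ends : E → Sym2 V} {s t : V} {X : Set E} [Fintype E]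
    (hconn : ∀ u v : V, Reach ends (∅ : Set E) u v)
    (hX : IsMinimumCut ends X {s} {t}) (w : V) :
    Reach ends X s w ∨ Reach ends X t w := by
  have h := hconn s w
  induction h with
  | refl => exact Or.inl .refl
  | @tail c b _ hcb ih =>
    obtain ⟨f, _, hfe⟩ := hcb
    by_cases hfX : f ∈ X
    · obtain ⟨u, v, huv, hsu, htv⟩ := minCut_edge hX hfX
      rw [huv] at hfe
      rcases Sym2.eq_iff.mp hfe with ⟨h1, h2⟩ | ⟨h1, h2⟩
      · exact Or.inr (h2 ▸ htv)
      · exact Or.inl (h1 ▸ hsu)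
    · rcases ih with h1 | h1
      · exact Or.inl (h1.tail ⟨f, hfX, hfe⟩)
      · exact Or.inr (h1.tail ⟨f, hfX, hfe⟩)

lemma lamCut_eq {ends : E → Sym2 V} {s t : V} {X : Set E}
    (hX : IsMinimumCut ends X {s} {t}) : lamCut ends s t = X.ncard := by
  refine le_antisymm (Nat.sInf_le ⟨X, hX.1, rfl⟩) (le_csInf ⟨X.ncard, X, hX.1, rfl⟩ ?_)
  rintro n ⟨Y, hY, rfl⟩
  exact hX.2 Y hY

lemma one_le_lamCut {ends : E → Sym2 V} {s t : V} [Fintype E]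
    (hconn : ∀ u v : V, Reach ends (∅ : Set E) u v) (hst : s ≠ t) :
    1 ≤ lamCut ends s t := by
  have huniv : IsCut ends (Set.univ : Set E) {s} {t} := by
    have key : ∀ a w : V, Reach ends (Set.univ : Set E) a w → w = a := by
      intro a w h
      induction h with
      | refl => rfl
      | tail _ hcb ih => exact absurd hcb.choose_spec.1 (by simp)
    rw [IsCut, Set.eq_empty_iff_forall_notMem]
    rintro w ⟨h1, h2⟩
    exact hst ((key s w (mem_RS_iff.mp h1)).symm.trans (key t w (mem_RS_iff.mp h2)))
  have hne : {n | ∃ X : Set E, IsCut ends X {s} {t} ∧ X.ncard = n}.Nonempty :=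
    ⟨_, Set.univ, huniv, rfl⟩
  have hmem := Nat.sInf_mem hne
  obtain ⟨Y, hY, hYn⟩ := hmem
  rw [Nat.one_le_iff_ne_zero]
  intro h0
  rw [lamCut] at h0
  rw [h0] at hYn
  have : Y = ∅ := (Set.ncard_eq_zero Y.toFinite).mp hYn
  subst this
  exact not_both hY (hconn s t) .refl

end Basic

section Comp
variable {V E : Type}

lemma adjIn_symm {ends : E → Sym2 V} {B : Set V} {u v : V}
    (h : AdjIn ends B u v) : AdjIn ends B v u := by
  obtain ⟨h1, h2, e, he⟩ := h
  exact ⟨h2, h1, e, by rw [he, Sym2.eq_swap]⟩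

lemma reachIn_symm {ends : E → Sym2 V} {B : Set V} {u v : V}
    (h : ReachIn ends B u v) : ReachIn ends B v u :=
  (@Relation.ReflTransGen.symmetric _ _ ⟨fun _ _ h => adjIn_symm h⟩).symm _ _ h

lemma compIn_subset {ends : E → Sym2 V} {B : Set V} {u : V} :
    compIn ends B u ⊆ B := fun _ h => h.1

lemma mem_compIn_self {ends : E → Sym2 V} {B : Set V} {u : V} (hu : u ∈ B) :
    u ∈ compIn ends B u := ⟨hu, .refl⟩

lemma compIn_closed {ends : E → Sym2 V} {B : Set V} {v₀ v w : V}
    (hv : v ∈ compIn ends B v₀) (h : AdjIn ends B v w) : w ∈ compIn ends B v₀ :=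
  ⟨h.2.1, hv.2.tail h⟩

lemma compIn_eq_of_mem {ends : E → Sym2 V} {B : Set V} {u v : V}
    (hv : v ∈ compIn ends B u) : compIn ends B u = compIn ends B v := by
  ext w
  constructor
  · intro hw
    exact ⟨hw.1, (reachIn_symm hv.2).trans hw.2⟩
  · intro hw
    exact ⟨hw.1, hv.2.trans hw.2⟩

lemma componentsIn_eq_singleton {ends : E → Sym2 V} {B : Set V}
    (h : ConnIn ends B) (hne : B.Nonempty) : componentsIn ends B = {B} := by
  ext K
  simp only [componentsIn, Set.mem_setOf_eq, Set.mem_singleton_iff]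
  constructor
  · rintro ⟨u, hu, rfl⟩
    ext v
    exact ⟨fun hv => hv.1, fun hv => ⟨hv, h u hu v hv⟩⟩
  · rintro rfl
    obtain ⟨u, hu⟩ := hne
    exact ⟨u, hu, by ext v; exact ⟨fun hv => ⟨hv, h u hu v hv⟩, fun hv => hv.1⟩⟩

lemma reachIn_of_reach_RS {ends : E → Sym2 V} {X : Set E} {s w : V}
    (h : Reach ends X s w) : ReachIn ends (RS ends X {s}) s w := by
  induction h with
  | refl => exact .refl
  | @tail c b hsc hcb ih =>
    obtain ⟨e, hee, he⟩ := hcb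
    exact ih.tail ⟨mem_RS_iff.mpr hsc, mem_RS_iff.mpr (hsc.tail ⟨e, hee, he⟩), e, he⟩

lemma connIn_RS {ends : E → Sym2 V} {X : Set E} {s : V} :
    ConnIn ends (RS ends X {s}) := by
  intro u hu v hv
  exact (reachIn_symm (reachIn_of_reach_RS (mem_RS_iff.mp hu))).trans
    (reachIn_of_reach_RS (mem_RS_iff.mp hv))

lemma reachIn_compl_of_reach_t {ends : E → Sym2 V} {X : Set E} {s t w : V}
    (hX : IsCut ends X {s} {t}) (h : Reach ends X t w) :
    ReachIn ends (Set.univ \ RS ends X {s}) t w := by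
  induction h with
  | refl => exact .refl
  | @tail c b htc hcb ih =>
    obtain ⟨e, hee, he⟩ := hcb
    refine ih.tail ⟨⟨trivial, fun hc => not_both hX (mem_RS_iff.mp hc) htc⟩,
      ⟨trivial, fun hc => not_both hX (mem_RS_iff.mp hc) (htc.tail ⟨e, hee, he⟩)⟩, e, he⟩

lemma connIn_compl {ends : E → Sym2 V} {X : Set E} {s t : V} [Fintype E]
    (hconn : ∀ u v : V, Reach ends (∅ : Set E) u v)
    (hX : IsMinimumCut ends X {s} {t}) :
    ConnIn ends (Set.univ \ RS ends X {s}) := by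
  intro u hu v hv
  have hru : Reach ends X t u := (minCut_cover hconn hX u).resolve_left
    (fun h => hu.2 (mem_RS_iff.mpr h))
  have hrv : Reach ends X t v := (minCut_cover hconn hX v).resolve_left
    (fun h => hv.2 (mem_RS_iff.mpr h))
  exact (reachIn_symm (reachIn_compl_of_reach_t hX.1 hru)).trans
    (reachIn_compl_of_reach_t hX.1 hrv)

end Comp

section Middle
variable {V E : Type} [Fintype E]

lemma middle_component {ends : E → Sym2 V}
    (hconn : ∀ u v : V, Reach ends (∅ : Set E) u v)
    {s t : V} {X Y : Set E}
    (hX : IsMinimumCut ends X {s} {t}) (hY : IsMinimumCut ends Y {s} {t})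
    (hsub : RS ends X {s} ⊆ RS ends Y {s})
    {K : Set V} (hK : K ∈ componentsIn ends (RS ends Y {s} \ RS ends X {s})) :
    1 ≤ {e | e ∈ X ∧ ∃ v ∈ K, v ∈ ends e}.ncard ∧
      {e | e ∈ X ∧ ∃ v ∈ K, v ∈ ends e}.ncard
        = {e | e ∈ Y ∧ ∃ v ∈ K, v ∈ ends e}.ncard := by
  set S := RS ends X {s} with hS
  set T := RS ends Y {s} with hT
  set A := {e | e ∈ X ∧ ∃ v ∈ K, v ∈ ends e} with hAdef
  set Bs := {e | e ∈ Y ∧ ∃ v ∈ K, v ∈ ends e} with hBdef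
  obtain ⟨u₀, hu₀, hKeq⟩ := hK
  have hKB : K ⊆ T \ S := hKeq ▸ compIn_subset
  have hKT : ∀ {v}, v ∈ K → v ∈ T := fun hv => (hKB hv).1
  have hKS : ∀ {v}, v ∈ K → v ∉ S := fun hv => (hKB hv).2
  have hclosed : ∀ {x y : V}, x ∈ K → AdjIn ends (T \ S) x y → y ∈ K := by
    intro x y hx hxy
    rw [hKeq] at hx ⊢
    exact compIn_closed hx hxy
  have hsS : s ∈ S := mem_RS_iff.mpr .refl
  have hsT : s ∈ T := hsub hsS
  have htS : t ∉ S := fun h => not_both hX.1 (mem_RS_iff.mp h) .refl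
  have htT : t ∉ T := fun h => not_both hY.1 (mem_RS_iff.mp h) .refl
  -- classification of edges leaving K
  have hk2 : ∀ {w w' : V}, w ∈ K → w' ∉ K → ∀ e : E, ends e = s(w, w') →
      e ∈ A ∨ e ∈ Bs := by
    intro w w' hw hw' e he
    have hwe : w ∈ ends e := by rw [he]; exact Sym2.mem_mk_left w w'
    by_cases hw'S : w' ∈ S
    · refine Or.inl ⟨?_, w, hw, hwe⟩
      exact edge_mem_of_cross (mem_RS_iff.mp hw'S)
        (fun h => hKS hw (mem_RS_iff.mpr h)) (by rw [he, Sym2.eq_swap])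
    · by_cases hw'T : w' ∈ T
      · exact absurd (hclosed hw ⟨hKB hw, ⟨hw'T, hw'S⟩, e, he⟩) hw'
      · refine Or.inr ⟨?_, w, hw, hwe⟩
        exact edge_mem_of_cross (mem_RS_iff.mp (hKT hw))
          (fun h => hw'T (mem_RS_iff.mpr h)) he
  -- endpoints of edges of A and Bs
  have hAcross : ∀ e ∈ A, ∃ x y : V, ends e = s(x, y) ∧ x ∈ S ∧ y ∈ K := by
    rintro e ⟨heX, v, hvK, hv⟩
    obtain ⟨x, y, hxy, hsx, hty⟩ := minCut_edge hX heX
    rw [hxy] at hv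
    rcases Sym2.mem_iff.mp hv with rfl | rfl
    · exact absurd (mem_RS_iff.mpr hsx) (hKS hvK)
    · exact ⟨x, v, hxy, mem_RS_iff.mpr hsx, hvK⟩
  have hBcross : ∀ e ∈ Bs, ∃ x y : V, ends e = s(x, y) ∧ x ∈ K ∧ y ∉ T := by
    rintro e ⟨heY, v, hvK, hv⟩
    obtain ⟨x, y, hxy, hsx, hty⟩ := minCut_edge hY heY
    have hyT : y ∉ T := fun h => not_both hY.1 (mem_RS_iff.mp h) hty
    rw [hxy] at hv
    rcases Sym2.mem_iff.mp hv with rfl | rfl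
    · exact ⟨v, y, hxy, hvK, hyT⟩
    · exact absurd (hKT hvK) hyT
  -- first auxiliary cut
  have hcut1 : IsCut ends ((X \ A) ∪ Bs) {s} {t} := by
    have claim1 : ∀ w, Reach ends ((X \ A) ∪ Bs) s w → w ∈ S ∪ K := by
      intro w h
      induction h with
      | refl => exact Or.inl hsS
      | @tail c b hsc hcb ih =>
        obtain ⟨f, hfX', hf⟩ := hcb
        rcases ih with hcS | hcK
        · by_cases hfX : f ∈ X
          · have hfA : f ∈ A := by
              by_contra h; exact hfX' (Or.inl ⟨hfX, h⟩)
            obtain ⟨v, hvK, hv⟩ := hfA.2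
            rw [hf] at hv
            rcases Sym2.mem_iff.mp hv with rfl | rfl
            · exact absurd hcS (hKS hvK)
            · exact Or.inr hvK
          · exact Or.inl (mem_RS_iff.mpr ((mem_RS_iff.mp hcS).tail ⟨f, hfX, hf⟩))
        · by_cases hbK : b ∈ K
          · exact Or.inr hbK
          · rcases hk2 hcK hbK f hf with hfA | hfB
            · obtain ⟨x, y, hxy, hxS, hyK⟩ := hAcross f hfA
              rw [hf] at hxy
              rcases Sym2.eq_iff.mp hxy.symm with ⟨rfl, rfl⟩ | ⟨rfl, rfl⟩
              · exact absurd hxS (hKS hcK)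
              · exact Or.inl hxS
            · exact absurd (Or.inr hfB) hfX'
    have claim2 : ∀ w, Reach ends ((X \ A) ∪ Bs) t w → w ∉ S ∪ K := by
      intro w h
      induction h with
      | refl =>
        rintro (h | h)
        · exact htS h
        · exact htT (hKT h)
      | @tail c b htc hcb ih =>
        obtain ⟨f, hfX', hf⟩ := hcb
        rintro (hbS | hbK)
        · have hcS : c ∉ S := fun h => ih (Or.inl h)
          have hfX : f ∈ X := edge_mem_of_cross (mem_RS_iff.mp hbS)
            (fun h => hcS (mem_RS_iff.mpr h)) (by rw [hf, Sym2.eq_swap])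
          have hfA : f ∈ A := by
            by_contra h; exact hfX' (Or.inl ⟨hfX, h⟩)
          obtain ⟨v, hvK, hv⟩ := hfA.2
          rw [hf] at hv
          rcases Sym2.mem_iff.mp hv with rfl | rfl
          · exact ih (Or.inr hvK)
          · exact hKS hvK hbS
        · have hcK : c ∉ K := fun h => ih (Or.inr h)
          rcases hk2 hbK hcK f (by rw [hf, Sym2.eq_swap]) with hfA | hfB
          · obtain ⟨x, y, hxy, hxS, hyK⟩ := hAcross f hfA
            rw [hf] at hxy
            rcases Sym2.eq_iff.mp hxy.symm with ⟨rfl, rfl⟩ | ⟨rfl, rfl⟩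
            · exact ih (Or.inl hxS)
            · exact hKS hbK hxS
          · exact hfX' (Or.inr hfB)
    rw [IsCut, Set.eq_empty_iff_forall_notMem]
    rintro w ⟨h1, h2⟩
    exact claim2 w (mem_RS_iff.mp h2) (claim1 w (mem_RS_iff.mp h1))
  -- second auxiliary cut
  have hcut2 : IsCut ends ((Y \ Bs) ∪ A) {s} {t} := by
    have claim1 : ∀ w, Reach ends ((Y \ Bs) ∪ A) s w → w ∈ T \ K := by
      intro w h
      induction h with
      | refl => exact ⟨hsT, fun h => hKS h hsS⟩
      | @tail c b hsc hcb ih =>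
        obtain ⟨f, hfX', hf⟩ := hcb
        by_cases hbK : b ∈ K
        · rcases hk2 hbK ih.2 f (by rw [hf, Sym2.eq_swap]) with hfA | hfB
          · exact absurd (Or.inr hfA) hfX'
          · obtain ⟨x, y, hxy, hxK, hyT⟩ := hBcross f hfB
            rw [hf] at hxy
            rcases Sym2.eq_iff.mp hxy.symm with ⟨rfl, rfl⟩ | ⟨rfl, rfl⟩
            · exact absurd hxK ih.2
            · exact absurd ih.1 hyT
        · refine ⟨?_, hbK⟩
          by_cases hfY : f ∈ Y
          · have hfB : f ∈ Bs := by
              by_contra h; exact hfX' (Or.inl ⟨hfY, h⟩)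
            obtain ⟨v, hvK, hv⟩ := hfB.2
            rw [hf] at hv
            rcases Sym2.mem_iff.mp hv with rfl | rfl
            · exact absurd hvK ih.2
            · exact absurd hvK hbK
          · exact mem_RS_iff.mpr ((mem_RS_iff.mp ih.1).tail ⟨f, hfY, hf⟩)
    have claim2 : ∀ w, Reach ends ((Y \ Bs) ∪ A) t w → w ∉ T \ K := by
      intro w h
      induction h with
      | refl => exact fun h => htT h.1
      | @tail c b htc hcb ih =>
        obtain ⟨f, hfX', hf⟩ := hcb
        intro hb
        by_cases hcK : c ∈ K
        · rcases hk2 hcK hb.2 f hf with hfA | hfB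
          · exact hfX' (Or.inr hfA)
          · obtain ⟨x, y, hxy, hxK, hyT⟩ := hBcross f hfB
            rw [hf] at hxy
            rcases Sym2.eq_iff.mp hxy.symm with ⟨rfl, rfl⟩ | ⟨rfl, rfl⟩
            · exact hyT hb.1
            · exact hb.2 hxK
        · have hcT : c ∉ T := by
            intro hcT
            exact ih ⟨hcT, hcK⟩
          have hfY : f ∈ Y := edge_mem_of_cross (mem_RS_iff.mp hb.1)
            (fun h => hcT (mem_RS_iff.mpr h)) (by rw [hf, Sym2.eq_swap])
          have hfB : f ∈ Bs := by
            by_contra h; exact hfX' (Or.inl ⟨hfY, h⟩)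
          obtain ⟨v, hvK, hv⟩ := hfB.2
          rw [hf] at hv
          rcases Sym2.mem_iff.mp hv with rfl | rfl
          · exact hcK hvK
          · exact hb.2 hvK
    rw [IsCut, Set.eq_empty_iff_forall_notMem]
    rintro w ⟨h1, h2⟩
    exact claim2 w (mem_RS_iff.mp h2) (claim1 w (mem_RS_iff.mp h1))
  -- counting
  have hAX : A ⊆ X := fun e he => he.1
  have hBY : Bs ⊆ Y := fun e he => he.1
  have haX : A.ncard ≤ X.ncard := Set.ncard_le_ncard hAX X.toFinite
  have hbY : Bs.ncard ≤ Y.ncard := Set.ncard_le_ncard hBY Y.toFinite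
  have hXY : X.ncard = Y.ncard := le_antisymm (hX.2 Y hY.1) (hY.2 X hX.1)
  have h1 : X.ncard ≤ ((X \ A) ∪ Bs).ncard := hX.2 _ hcut1
  have h1b : ((X \ A) ∪ Bs).ncard ≤ (X \ A).ncard + Bs.ncard := Set.ncard_union_le _ _
  have h2 : Y.ncard ≤ ((Y \ Bs) ∪ A).ncard := hY.2 _ hcut2
  have h2b : ((Y \ Bs) ∪ A).ncard ≤ (Y \ Bs).ncard + A.ncard := Set.ncard_union_le _ _
  have hd1 : (X \ A).ncard = X.ncard - A.ncard := Set.ncard_diff hAX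
  have hd2 : (Y \ Bs).ncard = Y.ncard - Bs.ncard := Set.ncard_diff hBY
  have hab : A.ncard = Bs.ncard := by omega
  refine ⟨?_, hab⟩
  by_contra hA0
  have hA0' : A.ncard = 0 := by omega
  have hAe : A = ∅ := (Set.ncard_eq_zero A.toFinite).mp hA0'
  have hBe : Bs = ∅ := (Set.ncard_eq_zero Bs.toFinite).mp (by omega)
  have key : ∀ w, Reach ends (∅ : Set E) s w → w ∉ K := by
    intro w h
    induction h with
    | refl => exact fun h => hKS h hsS
    | @tail c b hsc hcb ih =>
      intro hbK
      obtain ⟨f, _, hf⟩ := hcb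
      rcases hk2 hbK ih f (by rw [hf, Sym2.eq_swap]) with hfA | hfB
      · rw [hAe] at hfA; exact hfA
      · rw [hBe] at hfB; exact hfB
  have hu₀K : u₀ ∈ K := hKeq ▸ mem_compIn_self hu₀
  exact key u₀ (hconn s u₀) hu₀K

end Middle

section Count
variable {V E : Type} [Fintype V] [Fintype E]

lemma middle_count {ends : E → Sym2 V}
    (hconn : ∀ u v : V, Reach ends (∅ : Set E) u v)
    {s t : V} {X Y : Set E}
    (hX : IsMinimumCut ends X {s} {t}) (hY : IsMinimumCut ends Y {s} {t})
    (hsub : RS ends X {s} ⊆ RS ends Y {s}) :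
    (componentsIn ends (RS ends Y {s} \ RS ends X {s})).ncard ≤ X.ncard := by
  set B := RS ends Y {s} \ RS ends X {s} with hB
  rcases Set.eq_empty_or_nonempty (componentsIn ends B) with he | ⟨K₀, hK₀⟩
  · simp [he]
  have hinc : ∀ K ∈ componentsIn ends B, ∃ e, e ∈ X ∧ ∃ v ∈ K, v ∈ ends e := by
    intro K hK
    have h := (middle_component hconn hX hY hsub hK).1
    have hne : {e | e ∈ X ∧ ∃ v ∈ K, v ∈ ends e}.Nonempty := by
      rw [← Set.ncard_pos (Set.toFinite _)] at *
      omega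
    exact hne
  have hE : Nonempty E := by
    obtain ⟨e, _⟩ := hinc K₀ hK₀
    exact ⟨e⟩
  classical
  set f : Set V → E := fun K =>
    if h : ∃ e, e ∈ X ∧ ∃ v ∈ K, v ∈ ends e then h.choose else Classical.arbitrary E
    with hf
  have hspec : ∀ K ∈ componentsIn ends B, f K ∈ X ∧ ∃ v ∈ K, v ∈ ends (f K) := by
    intro K hK
    have h := hinc K hK
    simp only [hf, dif_pos h]
    exact h.choose_spec
  refine Set.ncard_le_ncard_of_injOn f (fun K hK => (hspec K hK).1) ?_ X.toFinite
  intro K hK K' hK' hff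
  obtain ⟨heX, v, hvK, hv⟩ := hspec K hK
  obtain ⟨heX', v', hvK', hv'⟩ := hspec K' hK'
  rw [hff] at hv
  obtain ⟨x, y, hxy, hsx, hty⟩ := minCut_edge hX heX'
  have hyS : y ∉ RS ends X {s} := fun h => not_both hX.1 (mem_RS_iff.mp h) hty
  obtain ⟨u, hu, hKeq⟩ := hK
  obtain ⟨u', hu', hKeq'⟩ := hK'
  have hKS : ∀ {w}, w ∈ K → w ∉ RS ends X {s} := by
    intro w hw
    rw [hKeq] at hw
    exact (compIn_subset hw).2
  have hKS' : ∀ {w}, w ∈ K' → w ∉ RS ends X {s} := by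
    intro w hw
    rw [hKeq'] at hw
    exact (compIn_subset hw).2
  rw [hxy] at hv hv'
  have hvy : v = y := by
    rcases Sym2.mem_iff.mp hv with rfl | rfl
    · exact absurd (mem_RS_iff.mpr hsx) (hKS hvK)
    · rfl
  have hvy' : v' = y := by
    rcases Sym2.mem_iff.mp hv' with rfl | rfl
    · exact absurd (mem_RS_iff.mpr hsx) (hKS' hvK')
    · rfl
  subst hvy; subst hvy'
  rw [hKeq, hKeq']
  rw [hKeq] at hvK; rw [hKeq'] at hvK'
  rw [compIn_eq_of_mem hvK, compIn_eq_of_mem hvK']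

end Count



/-- With `C 0, …, C p` the canonical sequence of minimum `(s,t)`-cuts
of a connected multigraph and `V_0, …, V_{p+1}` the blocks: each block induces at most
`λ = λ_G(s,t)` connected components; for `1 ≤ i ≤ p` each component of `G[V_i]` is
incident with some number `c ≥ 1` of edges of `C (i-1)` and exactly `c` edges of `C i`;
`V_0` and `V_{p+1}` are connected; `V_0` is incident with all `λ` edges of `C 0` and
`V_{p+1}` with all `λ` edges of `C p`. -/
theorem blocks_components_structure {V E : Type} [Fintype V] [Fintype E]
    (ends : E → Sym2 V) (hloop : ∀ e, ¬ (ends e).IsDiag)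
    (hconn : ∀ u v : V, Reach ends (∅ : Set E) u v)
    (s t : V) (hst : s ≠ t)
    (p : ℕ) (C : ℕ → Set E) (hC : CanonSeq ends s t p C) :
    (∀ i : ℕ, i ≤ p + 1 →
      (componentsIn ends (blockOf ends s p C i)).ncard ≤ lamCut ends s t) ∧
    (∀ i : ℕ, 1 ≤ i → i ≤ p →
      ∀ K ∈ componentsIn ends (blockOf ends s p C i),
        ∃ c : ℕ, 1 ≤ c ∧
          {e | e ∈ C (i - 1) ∧ ∃ v ∈ K, v ∈ ends e}.ncard = c ∧
          {e | e ∈ C i ∧ ∃ v ∈ K, v ∈ ends e}.ncard = c) ∧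
    ConnIn ends (blockOf ends s p C 0) ∧
    ConnIn ends (blockOf ends s p C (p + 1)) ∧
    (∀ e ∈ C 0, ∃ v ∈ blockOf ends s p C 0, v ∈ ends e) ∧
    (∀ e ∈ C p, ∃ v ∈ blockOf ends s p C (p + 1), v ∈ ends e) := by
  have hCmin : ∀ i, i ≤ p → IsMinimumCut ends (C i) {s} {t} := by
    intro i hi
    rcases Nat.eq_zero_or_pos i with rfl | hpos
    · exact hC.1.1
    · exact (hC.2.1 i hpos hi).1
  have hsub : ∀ i, 1 ≤ i → i ≤ p →
      RS ends (C (i - 1)) {s} ⊆ RS ends (C i) {s} := by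
    intro i h1 h2 v hv
    exact (hC.2.1 i h1 h2).2.1 (Set.mem_union_left _ hv)
  have hlam : ∀ i, i ≤ p → (C i).ncard = lamCut ends s t :=
    fun i hi => (lamCut_eq (hCmin i hi)).symm
  have hb0 : blockOf ends s p C 0 = RS ends (C 0) {s} := by simp [blockOf]
  have hbi : ∀ i, 1 ≤ i → i ≤ p →
      blockOf ends s p C i = RS ends (C i) {s} \ RS ends (C (i - 1)) {s} := by
    intro i h1 h2
    unfold blockOf
    rw [if_neg (by omega), if_pos h2]
  have hbp : blockOf ends s p C (p + 1) = Set.univ \ RS ends (C p) {s} := by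
    unfold blockOf
    rw [if_neg (by omega), if_neg (by omega)]
  have hsS : s ∈ RS ends (C 0) {s} := mem_RS_iff.mpr .refl
  have htT : t ∉ RS ends (C p) {s} :=
    fun h => not_both (hCmin p le_rfl).1 (mem_RS_iff.mp h) .refl
  refine ⟨?_, ?_, ?_, ?_, ?_, ?_⟩
  · -- component counts
    intro i hi
    rcases Nat.eq_zero_or_pos i with rfl | hpos
    · rw [hb0, componentsIn_eq_singleton connIn_RS ⟨s, hsS⟩, Set.ncard_singleton]
      exact one_le_lamCut hconn hst
    rcases Nat.lt_or_ge i (p + 1) with hip | hip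
    · have h2 : i ≤ p := by omega
      rw [hbi i hpos h2]
      calc (componentsIn ends (RS ends (C i) {s} \ RS ends (C (i - 1)) {s})).ncard
          ≤ (C (i - 1)).ncard :=
            middle_count hconn (hCmin (i - 1) (by omega)) (hCmin i h2) (hsub i hpos h2)
        _ = lamCut ends s t := hlam (i - 1) (by omega)
    · have : i = p + 1 := by omega
      subst this
      rw [hbp, componentsIn_eq_singleton (connIn_compl hconn (hCmin p le_rfl))
        ⟨t, trivial, htT⟩, Set.ncard_singleton]
      exact one_le_lamCut hconn hst
  · -- middle block components
    intro i h1 h2 K hK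
    rw [hbi i h1 h2] at hK
    have h := middle_component hconn (hCmin (i - 1) (by omega)) (hCmin i h2)
      (hsub i h1 h2) hK
    exact ⟨_, h.1, rfl, h.2.symm⟩
  · exact hb0 ▸ connIn_RS
  · exact hbp ▸ connIn_compl hconn (hCmin p le_rfl)
  · intro e he
    obtain ⟨u, v, huv, hsu, _⟩ := minCut_edge (hCmin 0 (by omega)) he
    exact ⟨u, hb0 ▸ mem_RS_iff.mpr hsu, by rw [huv]; exact Sym2.mem_mk_left u v⟩
  · intro e he
    obtain ⟨u, v, huv, _, htv⟩ := minCut_edge (hCmin p le_rfl) he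
    refine ⟨v, hbp ▸ ⟨trivial, fun h => not_both (hCmin p le_rfl).1 (mem_RS_iff.mp h) htv⟩,
      by rw [huv]; exact Sym2.mem_mk_right u v⟩

end FlowAug
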